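/- Integrating a zero-mean Gaussian density over an exponential prior on its variance scale yields a Laplace density: for all real λ > 0, ψ > 0 and all β ∈ ℝ, ∫_{θ ∈ (0,∞)} (2π θ ψ)^{−1/2} · exp(−β² / (2 θ ψ)) · (λ/2) · exp(−λ θ / 2) dθ = (1/2) · √(λ/ψ) · exp(−√(λ/ψ) · |β|). -/

import Mathlib

open Real MeasureTheory
open Set

-- the symmetry integral: ∫_{0}^{∞} exp(-(√b u - √a/u)^2) du = √π / (2√b)
lemma aux_J (a b : ℝ) (ha : 0 < a) (hb : 0 < b) :
    ∫ u in Ioi (0:ℝ), Real.exp (-(Real.sqrt b * u - Real.sqrt a / u)^2) =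
      Real.sqrt π / (2 * Real.sqrt b) := by
  set sa := Real.sqrt a with hsa
  set sb := Real.sqrt b with hsb
  have hsa0 : 0 < sa := Real.sqrt_pos.2 ha
  have hsb0 : 0 < sb := Real.sqrt_pos.2 hb
  set f : ℝ → ℝ := fun u => sb * u - sa / u with hf
  -- derivative of f on Ioi 0
  have hderiv : ∀ u ∈ Ioi (0:ℝ), HasDerivWithinAt f (sb + sa / u^2) (Ioi 0) u := by
    intro u hu
    have hu0 : u ≠ 0 := (mem_Ioi.1 hu).ne'
    have h1 : HasDerivAt f (sb * 1 - sa * (-(u^2)⁻¹)) u := by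
      have hfe : f = fun y => sb * id y - sa * y⁻¹ := by ext y; simp [hf, div_eq_mul_inv]
      rw [hfe]
      exact ((hasDerivAt_id u).const_mul sb).sub ((hasDerivAt_inv hu0).const_mul sa)
    have : sb * 1 - sa * (-(u^2)⁻¹) = sb + sa / u^2 := by field_simp; ring
    exact (this ▸ h1).hasDerivWithinAt
  have hmono : StrictMonoOn f (Ioi (0:ℝ)) := by
    intro x hx y hy hxy
    have hx0 : (0:ℝ) < x := hx
    have hy0 : (0:ℝ) < y := hy
    have h1 : sb * x < sb * y := by nlinarith
    have h2 : sa / y < sa / x := by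
      apply div_lt_div_of_pos_left hsa0 hx0 hxy
    simp only [hf]; linarith
  have hinj : InjOn f (Ioi (0:ℝ)) := hmono.injOn
  -- image of f is all of ℝ
  have himg : f '' Ioi (0:ℝ) = univ := by
    apply eq_univ_of_forall
    intro w
    set r := Real.sqrt (w^2 + 4 * sa * sb) with hr
    have hr2 : r^2 = w^2 + 4 * sa * sb := Real.sq_sqrt (by nlinarith)
    have hrw : |w| < r := by
      have : Real.sqrt (w^2) < r := Real.sqrt_lt_sqrt (sq_nonneg w) (by nlinarith)
      simpa [Real.sqrt_sq_eq_abs] using this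
    set u := (w + r) / (2 * sb) with hu
    have hu0 : 0 < u := by
      have : -w < r := lt_of_le_of_lt (neg_le_abs w) hrw
      apply div_pos (by linarith) (by linarith)
    refine ⟨u, hu0, ?_⟩
    have key : sb * u^2 - w * u - sa = 0 := by
      have : u = (w + r) / (2 * sb) := hu
      rw [this]
      field_simp
      nlinarith [hr2]
    show sb * u - sa / u = w
    field_simp
    nlinarith
  -- change of variables w = f u : full gaussian integral
  have hgauss : Integrable (fun w : ℝ => Real.exp (-w^2)) := by
    simpa using integrable_exp_neg_mul_sq (one_pos)
  have hKint : IntegrableOn (fun u => |sb + sa / u^2| • Real.exp (-(f u)^2)) (Ioi 0) := by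
    have := (integrableOn_image_iff_integrableOn_abs_deriv_smul measurableSet_Ioi hderiv hinj
      (fun w => Real.exp (-w^2)))
    rw [himg] at this
    exact this.1 hgauss.integrableOn
  have hK : ∫ u in Ioi (0:ℝ), |sb + sa / u^2| • Real.exp (-(f u)^2) = Real.sqrt π := by
    rw [← integral_image_eq_integral_abs_deriv_smul measurableSet_Ioi hderiv hinj
      (fun w => Real.exp (-w^2)), himg]
    rw [setIntegral_univ]
    simpa using integral_gaussian 1
  have hK' : ∫ u in Ioi (0:ℝ), (sb + sa / u^2) * Real.exp (-(f u)^2) = Real.sqrt π := by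
    rw [← hK]
    apply setIntegral_congr_fun measurableSet_Ioi
    intro u hu
    have hu0 : (0:ℝ) < u := hu
    have hpos : 0 < sb + sa / u^2 := by positivity
    simp [smul_eq_mul, abs_of_pos hpos]
  -- integrability of exp(-(f u)^2) on Ioi 0
  have ha2 : sa^2 = a := Real.sq_sqrt ha.le
  have hb2 : sb^2 = b := Real.sq_sqrt hb.le
  have hcontf : ContinuousOn f (Ioi 0) := by
    apply ContinuousOn.sub (continuous_const.mul continuous_id).continuousOn
    exact continuousOn_const.div continuousOn_id (fun u hu => ne_of_gt hu)
  have hcont : ContinuousOn (fun u => Real.exp (-(f u)^2)) (Ioi 0) :=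
    Real.continuous_exp.comp_continuousOn ((hcontf.pow 2).neg)
  have hJint : IntegrableOn (fun u => Real.exp (-(f u)^2)) (Ioi 0) := by
    apply Integrable.mono'
      (((integrable_exp_neg_mul_sq hb).const_mul (Real.exp (2*sa*sb))).restrict (s := Ioi 0))
    · exact hcont.aestronglyMeasurable measurableSet_Ioi
    · filter_upwards [ae_restrict_mem measurableSet_Ioi] with u hu
      have hu0 : (0:ℝ) < u := hu
      rw [Real.norm_eq_abs, abs_of_pos (Real.exp_pos _), ← Real.exp_add]
      apply Real.exp_le_exp.2
      have hexp : (f u)^2 = b*u^2 + a/u^2 - 2*sa*sb := by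
        have hne : u ≠ 0 := ne_of_gt hu0
        have : (f u)^2 = sb^2*u^2 + sa^2/u^2 - 2*sa*sb := by
          simp only [hf]; field_simp; ring
        rw [this, ha2, hb2]
      have : 0 ≤ a / u^2 := by positivity
      rw [hexp]; linarith
  -- inversion substitution
  set g : ℝ → ℝ := fun v => sa/sb * v⁻¹ with hg
  have hgderiv : ∀ v ∈ Ioi (0:ℝ), HasDerivWithinAt g (sa/sb * (-(v^2)⁻¹)) (Ioi 0) v :=
    fun v hv => (((hasDerivAt_inv (ne_of_gt hv)).const_mul (sa/sb)).hasDerivWithinAt)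
  have hginj : InjOn g (Ioi (0:ℝ)) := by
    have : StrictAntiOn g (Ioi (0:ℝ)) := by
      intro x hx y hy hxy
      have hx0 : (0:ℝ) < x := hx
      have hy0 : (0:ℝ) < y := hy
      have h2 : y⁻¹ < x⁻¹ := by exact (inv_lt_inv₀ hy0 hx0).2 hxy
      have hc : 0 < sa/sb := by positivity
      simp only [hg]
      nlinarith
    exact this.injOn
  have hgimg : g '' Ioi (0:ℝ) = Ioi (0:ℝ) := by
    ext u
    constructor
    · rintro ⟨v, hv, rfl⟩
      have hv0 : (0:ℝ) < v := hv
      have : 0 < sa/sb * v⁻¹ := by positivity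
      exact this
    · intro hu
      have hu0 : (0:ℝ) < u := hu
      refine ⟨sa/(sb*u), mem_Ioi.2 (by positivity), ?_⟩
      simp only [hg]
      field_simp
  have hfg : ∀ v ∈ Ioi (0:ℝ), f (g v) = -(f v) := by
    intro v hv
    have hv0 : (0:ℝ) < v := hv
    have hgv : g v = sa/(sb*v) := by simp only [hg]; field_simp
    simp only [hf, hgv]
    have h4 : sa / (sa / (sb * v)) = sb * v := by
      rw [div_div_eq_mul_div, mul_comm, mul_div_assoc, div_self (ne_of_gt hsa0), mul_one]
    rw [h4]
    field_simp
    ring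
  have hJinv : ∫ u in Ioi (0:ℝ), Real.exp (-(f u)^2)
      = ∫ v in Ioi (0:ℝ), (sa/(sb*v^2)) * Real.exp (-(f v)^2) := by
    conv_lhs => rw [← hgimg]
    rw [integral_image_eq_integral_abs_deriv_smul measurableSet_Ioi hgderiv hginj
      (fun u => Real.exp (-(f u)^2))]
    apply setIntegral_congr_fun measurableSet_Ioi
    intro v hv
    have hv0 : (0:ℝ) < v := hv
    dsimp only
    rw [hfg v hv, neg_sq, smul_eq_mul]
    congr 1
    have h1 : sa/sb * -(v^2)⁻¹ = -(sa/(sb*v^2)) := by field_simp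
    rw [h1, abs_neg, abs_of_pos (by positivity)]
  -- integrability of the inverted integrand
  have hinvint : IntegrableOn (fun v => sa/(sb*v^2) * Real.exp (-(f v)^2)) (Ioi 0) := by
    have h0 := (integrableOn_image_iff_integrableOn_abs_deriv_smul measurableSet_Ioi hgderiv
      hginj (fun u => Real.exp (-(f u)^2)))
    rw [hgimg] at h0
    have h1 := h0.1 hJint
    apply h1.congr_fun _ measurableSet_Ioi
    intro v hv
    have hv0 : (0:ℝ) < v := hv
    dsimp only
    rw [hfg v hv, neg_sq, smul_eq_mul]
    congr 1
    have h2 : sa/sb * -(v^2)⁻¹ = -(sa/(sb*v^2)) := by field_simp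
    rw [h2, abs_neg, abs_of_pos (by positivity)]
  -- combine
  have hsplit : ∫ u in Ioi (0:ℝ), (sb + sa / u^2) * Real.exp (-(f u)^2)
      = (∫ u in Ioi (0:ℝ), sb * Real.exp (-(f u)^2))
        + ∫ u in Ioi (0:ℝ), sb * (sa/(sb*u^2) * Real.exp (-(f u)^2)) := by
    rw [← integral_add (hJint.const_mul sb) (hinvint.const_mul sb)]
    apply setIntegral_congr_fun measurableSet_Ioi
    intro u hu
    have hu0 : (0:ℝ) < u := hu
    have hne : u ≠ 0 := ne_of_gt hu0
    field_simp
  rw [hsplit, integral_const_mul, integral_const_mul, ← hJinv] at hK'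
  have : sb * ∫ u in Ioi (0:ℝ), Real.exp (-(f u)^2) = Real.sqrt π / 2 := by linarith
  show (∫ u in Ioi (0:ℝ), Real.exp (-(f u)^2)) = Real.sqrt π / (2 * sb)
  field_simp at this ⊢
  linarith

lemma aux_main (a b : ℝ) (ha : 0 ≤ a) (hb : 0 < b) :
    ∫ t in Ioi (0:ℝ), t ^ (-(1:ℝ)/2) * Real.exp (-(a/t) - b*t)
      = Real.sqrt π / Real.sqrt b * Real.exp (-(2 * Real.sqrt (a*b))) := by
  have key : ∫ x in Ioi (0:ℝ), Real.exp (-(a/x^2) - b*x^2)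
      = Real.sqrt π / (2*Real.sqrt b) * Real.exp (-(2 * Real.sqrt (a*b))) := by
    rcases eq_or_lt_of_le ha with h0 | hpos
    · rw [← h0]
      simp only [zero_div, neg_zero, zero_sub, zero_mul, Real.sqrt_zero, mul_zero,
        Real.exp_zero, mul_one]
      have : ∫ x in Ioi (0:ℝ), Real.exp (-(b*x^2)) = Real.sqrt (π/b) / 2 := by
        simpa [neg_mul] using integral_gaussian_Ioi b
      rw [this, Real.sqrt_div pi_pos.le]
      ring
    · have hcong : ∀ x ∈ Ioi (0:ℝ), Real.exp (-(a/x^2) - b*x^2)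
          = Real.exp (-(2 * Real.sqrt (a*b))) * Real.exp (-(Real.sqrt b * x - Real.sqrt a / x)^2) := by
        intro x hx
        have hx0 : (0:ℝ) < x := hx
        rw [← Real.exp_add]
        congr 1
        have hab : Real.sqrt a * Real.sqrt b = Real.sqrt (a*b) :=
          (Real.sqrt_mul ha b).symm
        have ha2 : (Real.sqrt a)^2 = a := Real.sq_sqrt ha
        have hb2 : (Real.sqrt b)^2 = b := Real.sq_sqrt hb.le
        have hexp : (Real.sqrt b * x - Real.sqrt a / x)^2
            = (Real.sqrt b)^2*x^2 + (Real.sqrt a)^2/x^2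
              - 2*(Real.sqrt a * Real.sqrt b) := by
          field_simp
          linear_combination
        rw [hexp, ha2, hb2, hab]
        ring
      rw [setIntegral_congr_fun measurableSet_Ioi hcong, integral_const_mul,
        aux_J a b hpos hb]
      ring
  have sub := integral_comp_rpow_Ioi_of_pos
    (g := fun t => t ^ (-(1:ℝ)/2) * Real.exp (-(a/t) - b*t)) (two_pos)
  rw [← sub]
  have hcong2 : ∀ x ∈ Ioi (0:ℝ),
      ((2:ℝ) * x ^ ((2:ℝ) - 1)) • ((x ^ (2:ℝ)) ^ (-(1:ℝ)/2)
        * Real.exp (-(a/(x ^ (2:ℝ))) - b*(x ^ (2:ℝ))))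
      = 2 * Real.exp (-(a/x^2) - b*x^2) := by
    intro x hx
    have hx0 : (0:ℝ) < x := hx
    have hx2 : x ^ ((2:ℝ)) = x^2 := by
      rw [show ((2:ℝ)) = ((2:ℕ):ℝ) by norm_num, Real.rpow_natCast]
    have h1 : x ^ ((2:ℝ)-1) = x := by norm_num
    have h2 : (x^2 : ℝ) ^ (-(1:ℝ)/2) = x⁻¹ := by
      rw [neg_div, Real.rpow_neg (by positivity), ← Real.sqrt_eq_rpow,
        Real.sqrt_sq hx0.le]
    rw [hx2, h1, h2, smul_eq_mul]
    field_simp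
  rw [setIntegral_congr_fun measurableSet_Ioi hcong2, integral_const_mul, key]
  field_simp


/-- Integrating a zero-mean Gaussian density over an exponential prior on its
variance scale yields a Laplace density. -/
theorem gaussian_exponential_scale_mixture_is_laplace
    (lam ψ : ℝ) (hlam : 0 < lam) (hψ : 0 < ψ) (β : ℝ) :
    ∫ θ in Set.Ioi (0 : ℝ),
        (2 * π * θ * ψ) ^ (-(1 : ℝ) / 2) * Real.exp (-β ^ 2 / (2 * θ * ψ)) *
          ((lam / 2) * Real.exp (-lam * θ / 2)) =
      (1 / 2) * Real.sqrt (lam / ψ) * Real.exp (-Real.sqrt (lam / ψ) * |β|) := by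
  have hπ : (0:ℝ) < π := pi_pos
  set a := β^2/(2*ψ) with hadef
  have ha : 0 ≤ a := by positivity
  have hb : 0 < lam/2 := by linarith
  have hcong : ∀ θ ∈ Ioi (0:ℝ),
      (2 * π * θ * ψ) ^ (-(1 : ℝ) / 2) * Real.exp (-β ^ 2 / (2 * θ * ψ)) *
          ((lam / 2) * Real.exp (-lam * θ / 2))
      = ((lam/2) * (2*π*ψ) ^ (-(1:ℝ)/2))
          * (θ ^ (-(1:ℝ)/2) * Real.exp (-(a/θ) - (lam/2)*θ)) := by
    intro θ hθ
    have hθ0 : (0:ℝ) < θ := hθ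
    have h1 : (2*π*θ*ψ : ℝ)^(-(1:ℝ)/2) = (2*π*ψ)^(-(1:ℝ)/2) * θ^(-(1:ℝ)/2) := by
      rw [show (2*π*θ*ψ : ℝ) = (2*π*ψ)*θ by ring,
        Real.mul_rpow (by positivity) hθ0.le]
    have h2 : -β^2/(2*θ*ψ) = -(a/θ) := by
      rw [hadef]; field_simp <;> exact Or.inl (by ring)
    have h3 : -lam*θ/2 = -((lam/2)*θ) := by ring
    rw [h1, h2, h3, sub_eq_add_neg, Real.exp_add]
    ring
  rw [setIntegral_congr_fun measurableSet_Ioi hcong, integral_const_mul,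
    aux_main a (lam/2) ha hb]
  have h4 : Real.sqrt 4 = 2 := by
    rw [show (4:ℝ) = 2^2 by norm_num, Real.sqrt_sq (by norm_num : (0:ℝ) ≤ 2)]
  have hab : 2 * Real.sqrt (a * (lam/2)) = Real.sqrt (lam/ψ) * |β| := by
    have : a * (lam/2) = β^2 * ((lam/ψ)/4) := by rw [hadef]; ring
    rw [this, Real.sqrt_mul (sq_nonneg β), Real.sqrt_sq_eq_abs,
      Real.sqrt_div (by positivity : (0:ℝ) ≤ lam/ψ), h4]
    ring
  have hexpeq : Real.exp (-(2 * Real.sqrt (a * (lam/2))))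
      = Real.exp (-Real.sqrt (lam/ψ) * |β|) := by
    rw [hab, neg_mul]
  have e1 : ((2*π*ψ):ℝ) ^ (-(1:ℝ)/2) = (Real.sqrt (2*π*ψ))⁻¹ := by
    rw [neg_div, Real.rpow_neg (by positivity), ← Real.sqrt_eq_rpow]
  have hconst : lam/2 * (2*π*ψ)^(-(1:ℝ)/2) * (Real.sqrt π / Real.sqrt (lam/2))
      = 1/2 * Real.sqrt (lam/ψ) := by
    rw [e1, Real.sqrt_mul (by positivity : (0:ℝ) ≤ 2*π) ψ,
      Real.sqrt_mul (by norm_num : (0:ℝ) ≤ 2) π,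
      Real.sqrt_div hlam.le 2, Real.sqrt_div hlam.le ψ]
    have s2 : (0:ℝ) < Real.sqrt 2 := Real.sqrt_pos.2 (by norm_num)
    have sπ : (0:ℝ) < Real.sqrt π := Real.sqrt_pos.2 hπ
    have sψ : (0:ℝ) < Real.sqrt ψ := Real.sqrt_pos.2 hψ
    have sl : (0:ℝ) < Real.sqrt lam := Real.sqrt_pos.2 hlam
    have hl2 : Real.sqrt lam ^ 2 = lam := Real.sq_sqrt hlam.le
    field_simp
    linear_combination (-1) * hl2
  calc lam/2 * (2*π*ψ)^(-(1:ℝ)/2)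
        * (Real.sqrt π / Real.sqrt (lam/2) * Real.exp (-(2*Real.sqrt (a*(lam/2)))))
      = (lam/2 * (2*π*ψ)^(-(1:ℝ)/2) * (Real.sqrt π / Real.sqrt (lam/2)))
        * Real.exp (-(2*Real.sqrt (a*(lam/2)))) := by ring
    _ = 1/2 * Real.sqrt (lam/ψ) * Real.exp (-Real.sqrt (lam/ψ) * |β|) := by
        rw [hconst, hexpeq]
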